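/- Let x : [0,∞) → ℝ be càdlàg with x(0) ≥ 0. If (z, y) is any pair of càdlàg functions solving the one-dimensional Skorokhod problem for x, then z(t) = Γ₁(x)(t) and y(t) = Γ₂(x)(t) for all t ≥ 0, where Γ₂(x)(t) = sup_{0 ≤ s ≤ t} max(−x(s), 0) and Γ₁(x)(t) = x(t) + Γ₂(x)(t). In particular, the solution of the one-dimensional Skorokhod problem for x is unique. -/

import Mathlib

open MeasureTheory

/-- A function `x : ℝ → ℝ`, viewed as a path on `[0,∞)`, is càdlàg if it is
right-continuous at every `t ≥ 0` and has left limits at every `t > 0`. -/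
def Cadlag (x : ℝ → ℝ) : Prop :=
  (∀ t : ℝ, 0 ≤ t → ContinuousWithinAt x (Set.Ici t) t) ∧
  (∀ t : ℝ, 0 < t → ∃ l : ℝ, Filter.Tendsto x (nhdsWithin t (Set.Iio t)) (nhds l))

/-- `Γ₂(x)(t) = sup_{0 ≤ s ≤ t} max(−x(s), 0)`. -/
noncomputable def Gamma2 (x : ℝ → ℝ) (t : ℝ) : ℝ :=
  sSup ((fun s => max (-x s) 0) '' Set.Icc 0 t)

/-- `Γ₁(x)(t) = x(t) + Γ₂(x)(t)`. -/
noncomputable def Gamma1 (x : ℝ → ℝ) (t : ℝ) : ℝ := x t + Gamma2 x t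

/-- Uniqueness for the one-dimensional Skorokhod problem: if `(z, y)` is a pair of
càdlàg functions with `z = x + y` and `z ≥ 0` on `[0,∞)`, `y(0) = 0`, `y`
nondecreasing on `[0,∞)`, and the Lebesgue–Stieltjes measure induced by `y`
assigns zero mass to `{t ≥ 0 : z(t) > 0}`, then `(z, y) = (Γ₁(x), Γ₂(x))`. -/
theorem skorokhod_problem_uniqueness
    (x z y : ℝ → ℝ) (hx : Cadlag x) (hx0 : 0 ≤ x 0)
    (hz : Cadlag z) (hy : Cadlag y)
    (hzxy : ∀ t : ℝ, 0 ≤ t → z t = x t + y t)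
    (hznn : ∀ t : ℝ, 0 ≤ t → 0 ≤ z t)
    (hy0 : y 0 = 0)
    (hymono : MonotoneOn y (Set.Ici 0))
    (hyflat : ∃ S : StieltjesFunction ℝ, (∀ t : ℝ, 0 ≤ t → S t = y t) ∧
      (∀ t : ℝ, t ≤ 0 → S t = 0) ∧ S.measure {t : ℝ | 0 ≤ t ∧ 0 < z t} = 0) :
    ∀ t : ℝ, 0 ≤ t → z t = Gamma1 x t ∧ y t = Gamma2 x t := by
  obtain ⟨S, hSy, hS0, hSnull⟩ := hyflat
  intro t ht
  have hy_nn : ∀ s : ℝ, 0 ≤ s → 0 ≤ y s := by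
    intro s hs
    have := hymono (Set.mem_Ici.2 le_rfl) (Set.mem_Ici.2 hs) hs
    linarith [hy0]
  have hymem : ∀ s : ℝ, 0 ≤ s → s ≤ t → -x s ≤ y s := by
    intro s hs hst
    have := hznn s hs
    rw [hzxy s hs] at this
    linarith
  have hbdd : BddAbove ((fun s => max (-x s) 0) '' Set.Icc 0 t) := by
    refine ⟨y t, ?_⟩
    rintro a ⟨s, hs, rfl⟩
    have h1 : -x s ≤ y s := hymem s hs.1 hs.2
    have h2 : y s ≤ y t := hymono hs.1 (Set.mem_Ici.2 ht) hs.2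
    have h3 : 0 ≤ y t := hy_nn t ht
    exact max_le (by linarith) h3
  set M := Gamma2 x t with hMdef
  have hM0 : 0 ≤ M := by
    have hmem : (0 : ℝ) ∈ (fun s => max (-x s) 0) '' Set.Icc 0 t := by
      refine ⟨0, Set.mem_Icc.2 ⟨le_rfl, ht⟩, ?_⟩
      simp [max_eq_right (by linarith : -x 0 ≤ 0)]
    exact le_csSup hbdd hmem
  have hMx : ∀ s : ℝ, 0 ≤ s → s ≤ t → -x s ≤ M := by
    intro s hs hst
    have : max (-x s) 0 ≤ M :=
      le_csSup hbdd ⟨s, Set.mem_Icc.2 ⟨hs, hst⟩, rfl⟩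
    exact le_trans (le_max_left _ _) this
  -- Step 1 : M ≤ y t
  have hMle : M ≤ y t := by
    apply Real.sSup_le
    · rintro a ⟨s, hs, rfl⟩
      have h1 : -x s ≤ y s := hymem s hs.1 hs.2
      have h2 : y s ≤ y t := hymono hs.1 (Set.mem_Ici.2 ht) hs.2
      exact max_le (by linarith) (hy_nn t ht)
    · exact hy_nn t ht
  -- Step 2 : y t ≤ M
  have hyle : y t ≤ M := by
    by_contra hlt
    push_neg at hlt
    set A := {s : ℝ | s ∈ Set.Icc 0 t ∧ y s ≤ M} with hAdef
    have hA0 : (0 : ℝ) ∈ A := ⟨Set.mem_Icc.2 ⟨le_rfl, ht⟩, by rw [hy0]; exact hM0⟩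
    have hAbdd : BddAbove A := ⟨t, fun s hs => hs.1.2⟩
    set u := sSup A with hudef
    have hu0 : 0 ≤ u := le_csSup hAbdd hA0
    have hut : u ≤ t := csSup_le ⟨0, hA0⟩ fun s hs => hs.1.2
    have hbelow : ∀ s : ℝ, s < u → S s ≤ M := by
      intro s hsu
      rcases le_or_gt s 0 with h0 | h0
      · rw [hS0 s h0]; exact hM0
      · obtain ⟨a, ha, hsa⟩ := exists_lt_of_lt_csSup ⟨0, hA0⟩ hsu
        rw [hSy s h0.le]
        exact le_trans (hymono (Set.mem_Ici.2 h0.le) (Set.mem_Ici.2 ha.1.1) hsa.le) ha.2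
    have habove : ∀ s : ℝ, u < s → s ≤ t → M < y s := by
      intro s hus hst
      by_contra h
      push_neg at h
      exact absurd (le_csSup hAbdd ⟨Set.mem_Icc.2 ⟨le_trans hu0 hus.le, hst⟩, h⟩)
        (not_le.2 hus)
    rcases le_or_gt (y u) M with hyu | hyu
    · -- case y u ≤ M
      have hult : u < t := by
        rcases lt_or_eq_of_le hut with h | h
        · exact h
        · rw [h] at hyu; exact absurd hyu (not_le.2 hlt)
      have hsub : Set.Ioc u t ⊆ {s : ℝ | 0 ≤ s ∧ 0 < z s} := by
        rintro s ⟨hus, hst⟩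
        have hs0 : 0 ≤ s := le_trans hu0 hus.le
        have h1 : M < y s := habove s hus hst
        have h2 : -x s ≤ M := hMx s hs0 hst
        refine ⟨hs0, ?_⟩
        rw [hzxy s hs0]; linarith
      have hmz : S.measure (Set.Ioc u t) = 0 :=
        le_antisymm (hSnull ▸ measure_mono hsub) zero_le
      rw [S.measure_Ioc] at hmz
      have : S t - S u ≤ 0 := ENNReal.ofReal_eq_zero.mp hmz
      rw [hSy t ht, hSy u hu0] at this
      linarith
    · -- case M < y u
      have hupos : 0 < u := by
        rcases lt_or_eq_of_le hu0 with h | h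
        · exact h
        · exfalso; rw [← h, hy0] at hyu; linarith
      have hsub : Set.Icc u t ⊆ {s : ℝ | 0 ≤ s ∧ 0 < z s} := by
        rintro s ⟨hus, hst⟩
        have hs0 : 0 ≤ s := le_trans hu0 hus
        have h1 : M < y s := lt_of_lt_of_le hyu (hymono (Set.mem_Ici.2 hu0) (Set.mem_Ici.2 hs0) hus)
        have h2 : -x s ≤ M := hMx s hs0 hst
        refine ⟨hs0, ?_⟩
        rw [hzxy s hs0]; linarith
      have hmz : S.measure (Set.Icc u t) = 0 :=
        le_antisymm (hSnull ▸ measure_mono hsub) zero_le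
      rw [S.measure_Icc] at hmz
      have hle : S t - Function.leftLim S u ≤ 0 := ENNReal.ofReal_eq_zero.mp hmz
      have hll : Function.leftLim S u ≤ M := by
        refine le_of_tendsto (S.mono.tendsto_leftLim u) ?_
        filter_upwards [self_mem_nhdsWithin] with s hs
        exact hbelow s hs
      rw [hSy t ht] at hle
      linarith
  have hyG : y t = M := le_antisymm hyle hMle
  refine ⟨?_, hyG⟩
  rw [Gamma1, hzxy t ht, hyG]
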